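/- Let (h_i)_{i∈ℤ} be i.i.d. exponential of mean 1 and W(x) = λ x². There exists a > 0 such that for all 0 < λ < 1/4, P(0 ∈ B) > a·λ/ln(λ^{−1}), where B = {i ∈ ℤ : h_i ≥ W(j,h_j,k,h_k;i) for all j < i < k}. -/

import Mathlib

open MeasureTheory ProbabilityTheory Real

def encZ : ℕ → ℤ := fun m => if m % 2 = 0 then ((m / 2 : ℕ) : ℤ) else -(((m / 2 : ℕ) : ℤ) + 1)

lemma encZ_inj : Function.Injective encZ := by
  intro a b hab
  unfold encZ at hab
  split_ifs at hab <;> omega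

lemma encZ_surj : ∀ i : ℤ, ∃ m, encZ m = i := by
  intro i
  rcases le_or_gt 0 i with hi | hi
  · exact ⟨2 * i.toNat, by unfold encZ; simp; omega⟩
  · exact ⟨2 * (-i - 1).toNat + 1, by unfold encZ; simp [Nat.add_mod]; omega⟩

lemma encZ_zero : encZ 0 = 0 := by decide

lemma encZ_sq (m : ℕ) (hm : 1 ≤ m) : (m : ℤ) ≤ 2 * (encZ m)^2 := by
  unfold encZ
  split_ifs with hpar
  · obtain ⟨t, ht⟩ : ∃ t, m = 2 * t := ⟨m / 2, by omega⟩
    subst ht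
    have ht1 : 1 ≤ t := by omega
    have : (2*t) / 2 = t := by omega
    rw [this]; push_cast
    nlinarith [Int.ofNat_le.mpr ht1]
  · obtain ⟨t, ht⟩ : ∃ t, m = 2 * t + 1 := ⟨m / 2, by omega⟩
    subst ht
    have : (2*t+1) / 2 = t := by omega
    rw [this]; push_cast
    nlinarith [Int.ofNat_le.mpr (Nat.zero_le t)]

lemma exp_neg_two_le (x : ℝ) (h0 : 0 ≤ x) (h1 : x ≤ 1/2) : Real.exp (-(2*x)) ≤ 1 - x := by
  have he : Real.exp (-x) * (1 + x) ≤ 1 := by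
    have h2 := Real.add_one_le_exp x
    have h3 : Real.exp (-x) * Real.exp x = 1 := by rw [← Real.exp_add]; simp
    nlinarith [Real.exp_pos (-x)]
  have hee : Real.exp (-x) * (1+x) * (Real.exp (-x) * (1+x)) ≤ 1 := by
    nlinarith [mul_le_mul he he (by positivity : (0:ℝ) ≤ Real.exp (-x) * (1+x)) zero_le_one]
  have h4 : Real.exp (-(2*x)) = Real.exp (-x) * Real.exp (-x) := by
    rw [← Real.exp_add]; ring_nf
  rw [h4]
  nlinarith [hee, Real.exp_pos (-x), sq_nonneg x, mul_pos (Real.exp_pos (-x)) (Real.exp_pos (-x))]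


set_option maxHeartbeats 1600000 in
/-- Lower bound on `P(0 ∈ B)` for the parabola `W(x) = λx²`: there is `a > 0`
such that for all `0 < λ < 1/4`, `P(0 ∈ B) > a λ / ln(λ⁻¹)`. -/
theorem prob_zero_in_B_parabola_lower
    {Ω : Type*} [MeasurableSpace Ω] (P : Measure Ω) [IsProbabilityMeasure P]
    (h : ℤ → Ω → ℝ) (hmeas : ∀ i, Measurable (h i))
    (hindep : iIndepFun h P)
    (hexp : ∀ i t, 0 ≤ t → P {ω | t < h i ω} = ENNReal.ofReal (Real.exp (-t))) :
    ∃ a : ℝ, 0 < a ∧ ∀ l : ℝ, 0 < l → l < 1 / 4 →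
      ENNReal.ofReal (a * l / Real.log l⁻¹)
        < P {ω | ∀ j k : ℤ, j < 0 → 0 < k →
            l * ((0 : ℝ) - j) * ((0 : ℝ) - k)
              + (((k : ℝ) - 0) / ((k : ℝ) - j)) * h j ω
              + (((0 : ℝ) - j) / ((k : ℝ) - j)) * h k ω ≤ h 0 ω} := by
  classical
  set K : ℝ := Real.exp (-(9/2 : ℝ)) with hK
  have hK0 : 0 < K := Real.exp_pos _
  have hK1 : K ≤ 1 := Real.exp_le_one_iff.mpr (by norm_num)
  refine ⟨K/2, by positivity, ?_⟩
  intro l hl hl4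
  set c : ℝ := Real.log l⁻¹ with hc
  have hlog : Real.exp (-c) = l := by
    rw [hc, Real.log_inv, neg_neg, Real.exp_log hl]
  have hinv1 : (1:ℝ) ≤ l⁻¹ := by
    rw [le_inv_comm₀ one_pos hl]; linarith
  have hc0 : 0 ≤ c := Real.log_nonneg hinv1
  set C : ℤ → Set ℝ := fun i => if i = 0 then Set.Ici c else Set.Iic (c + l * (i:ℝ)^2) with hCdef
  set S : ℤ → Set Ω := fun i => h i ⁻¹' C i with hSdef
  have hCm : ∀ i, MeasurableSet (C i) := by
    intro i; simp only [hCdef]; split_ifs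
    · exact measurableSet_Ici
    · exact measurableSet_Iic
  have hSm : ∀ i, MeasurableSet (S i) := fun i => (hmeas i) (hCm i)
  -- probability of S 0
  have hP0 : ENNReal.ofReal l ≤ P (S 0) := by
    rw [← hlog, ← hexp 0 c hc0]
    apply measure_mono
    intro ω hω
    simp only [Set.mem_setOf_eq] at hω
    simp only [hSdef, hCdef, Set.mem_preimage, if_pos rfl, Set.mem_Ici]
    exact hω.le
  -- probability of S i, i ≠ 0
  have hPi : ∀ i : ℤ, i ≠ 0 →
      P (S i) = ENNReal.ofReal (1 - l * Real.exp (-(l * (i:ℝ)^2))) := by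
    intro i hi
    have h1 : S i = {ω | c + l * (i:ℝ)^2 < h i ω}ᶜ := by
      ext ω
      simp [hSdef, hCdef, hi, Set.mem_Iic, not_lt]
    have hms : MeasurableSet {ω | c + l * (i:ℝ)^2 < h i ω} :=
      measurableSet_lt measurable_const (hmeas i)
    have ht : (0:ℝ) ≤ c + l * (i:ℝ)^2 := by positivity
    rw [h1, measure_compl hms (measure_ne_top P _), measure_univ,
      hexp i _ ht]
    have he : Real.exp (-(c + l * (i:ℝ)^2)) = l * Real.exp (-(l * (i:ℝ)^2)) := by
      rw [neg_add, Real.exp_add, hlog]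
    rw [he, ENNReal.ofReal_sub _ (by positivity), ENNReal.ofReal_one]
  set r : ℝ := Real.exp (-(l/2)) with hr
  have hr0 : 0 < r := Real.exp_pos _
  have hr1 : r < 1 := Real.exp_lt_one_iff.mpr (by linarith)
  set y : ℕ → ℝ := fun m => if m = 0 then l else Real.exp (-(2 * (l * r^m))) with hy
  have hy0 : ∀ m, 0 ≤ y m := by
    intro m; simp only [hy]; split_ifs
    · exact hl.le
    · positivity
  -- factor bound
  have hfac : ∀ m : ℕ, ENNReal.ofReal (y m) ≤ P (S (encZ m)) := by
    intro m
    rcases Nat.eq_zero_or_pos m with rfl | hm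
    · rw [encZ_zero]; simpa only [hy, if_pos rfl] using hP0
    · have hm0 : encZ m ≠ 0 := by
        intro hcon
        have : m = 0 := encZ_inj (hcon.trans encZ_zero.symm)
        omega
      rw [hPi _ hm0]
      apply ENNReal.ofReal_le_ofReal
      simp only [hy, if_neg hm.ne']
      have hsq : (m:ℝ) / 2 ≤ ((encZ m : ℝ))^2 := by
        have := encZ_sq m hm
        have h2 : (m:ℝ) ≤ 2 * ((encZ m : ℝ))^2 := by exact_mod_cast this
        linarith
      have h1 : Real.exp (-(l * ((encZ m : ℝ))^2)) ≤ r^m := by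
        rw [hr, ← Real.exp_nat_mul]
        apply Real.exp_le_exp.mpr
        have : (m:ℝ) * (-(l/2)) = -(l * ((m:ℝ)/2)) := by ring
        rw [this]
        have := mul_le_mul_of_nonneg_left hsq hl.le
        linarith
      have h2 : l * Real.exp (-(l * ((encZ m : ℝ))^2)) ≤ l * r^m :=
        mul_le_mul_of_nonneg_left h1 hl.le
      have h3 : l * r^m ≤ 1/2 := by
        have hrm1 : r^m ≤ 1 := pow_le_one₀ hr0.le hr1.le
        nlinarith
      have h4 := exp_neg_two_le (l * r^m) (by positivity) h3
      linarith
  set F : ℕ → Finset ℤ := fun n => (Finset.range n).image encZ with hF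
  set G : ℕ → Set Ω := fun n => ⋂ i ∈ F n, S i with hG
  have hGm : ∀ n, MeasurableSet (G n) := by
    intro n
    exact MeasurableSet.biInter (F n).countable_toSet (fun i _ => hSm i)
  have hanti : Antitone G := by
    intro a b hab
    intro ω hω
    simp only [hG, Set.mem_iInter] at hω ⊢
    intro i hi
    exact hω i (Finset.image_subset_image (Finset.range_subset_range.mpr hab) hi)
  -- geometric sum bound
  have hrb : 4*l/9 ≤ 1 - r := by
    have he : r * (1 + l/2) ≤ 1 := by
      have h2 := Real.add_one_le_exp (l/2)
      have h3 : r * Real.exp (l/2) = 1 := by rw [hr, ← Real.exp_add]; simp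
      nlinarith [Real.exp_pos (-(l/2))]
    nlinarith
  have hgeom : ∀ n : ℕ, ∑ i ∈ Finset.range n, r^i ≤ 9/(4*l) := by
    intro n
    have h1 : ∑ i ∈ Finset.range n, r^i = (1 - r^n)/(1-r) := by
      rw [geom_sum_eq hr1.ne n]
      rw [div_eq_div_iff (by linarith) (by linarith)]
      ring
    rw [h1]
    have hrn : 0 ≤ r^n := by positivity
    rw [div_le_div_iff₀ (by linarith) (by positivity)]
    nlinarith
  -- product lower bound
  have hprod : ∀ n, l * K ≤ ∏ m ∈ Finset.range n, y m := by
    intro n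
    cases n with
    | zero => simp; nlinarith
    | succ n =>
      rw [Finset.prod_range_succ']
      have hy0' : y 0 = l := by simp [hy]
      have hys : ∀ i ∈ Finset.range n, y (i+1) = Real.exp (-(2 * (l * r^(i+1)))) := by
        intro i _; simp [hy]
      rw [hy0', Finset.prod_congr rfl hys, ← Real.exp_sum]
      have hsum : ∑ i ∈ Finset.range n, -(2 * (l * r^(i+1))) = -(2 * l * ∑ i ∈ Finset.range n, r^(i+1)) := by
        rw [Finset.mul_sum]
        simp [mul_assoc]
      rw [hsum]
      have hs1 : ∑ i ∈ Finset.range n, r^(i+1) ≤ ∑ i ∈ Finset.range n, r^i := by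
        apply Finset.sum_le_sum
        intro i _
        calc r^(i+1) = r^i * r := by ring
        _ ≤ r^i * 1 := by nlinarith [pow_nonneg hr0.le i]
        _ = r^i := by ring
      have hs2 := hgeom n
      have hs3 : 2 * l * ∑ i ∈ Finset.range n, r^(i+1) ≤ 9/2 := by
        have h5 : 2 * l * ∑ i ∈ Finset.range n, r^(i+1) ≤ 2 * l * (9/(4*l)) := by
          apply mul_le_mul_of_nonneg_left (hs1.trans hs2) (by positivity)
        have h6 : 2 * l * (9/(4*l)) = 9/2 := by field_simp; ring
        linarith
      have : K ≤ Real.exp (-(2 * l * ∑ i ∈ Finset.range n, r^(i+1))) := by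
        rw [hK]
        apply Real.exp_le_exp.mpr
        linarith
      nlinarith [Real.exp_pos (-(2 * l * ∑ i ∈ Finset.range n, r^(i+1)))]
  -- measure of G n
  have hPGn : ∀ n, ENNReal.ofReal (l * K) ≤ P (G n) := by
    intro n
    have hmeasb : P (G n) = ∏ i ∈ F n, P (S i) := by
      apply hindep.meas_biInter
      intro i _
      exact ⟨C i, hCm i, rfl⟩
    rw [hmeasb, hF]
    rw [Finset.prod_image (fun a _ b _ hab => encZ_inj hab)]
    calc ENNReal.ofReal (l * K) ≤ ENNReal.ofReal (∏ m ∈ Finset.range n, y m) :=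
          ENNReal.ofReal_le_ofReal (hprod n)
    _ = ∏ m ∈ Finset.range n, ENNReal.ofReal (y m) :=
          ENNReal.ofReal_prod_of_nonneg (fun i _ => hy0 i)
    _ ≤ ∏ m ∈ Finset.range n, P (S (encZ m)) := Finset.prod_le_prod' (fun i _ => hfac i)
  -- intersection bound
  have hPG : ENNReal.ofReal (l * K) ≤ P (⋂ n, G n) := by
    rw [hanti.measure_iInter (fun n => (hGm n).nullMeasurableSet) ⟨0, measure_ne_top P _⟩]
    exact le_iInf hPGn
  -- inclusion
  have hsub : (⋂ n, G n) ⊆ {ω | ∀ j k : ℤ, j < 0 → 0 < k →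
      l * ((0 : ℝ) - j) * ((0 : ℝ) - k)
        + (((k : ℝ) - 0) / ((k : ℝ) - j)) * h j ω
        + (((0 : ℝ) - j) / ((k : ℝ) - j)) * h k ω ≤ h 0 ω} := by
    intro ω hω
    have hωS : ∀ i : ℤ, h i ω ∈ C i := by
      intro i
      obtain ⟨m, hm⟩ := encZ_surj i
      have h1 : ω ∈ G (m+1) := by
        simp only [Set.mem_iInter] at hω; exact hω (m+1)
      simp only [hG, Set.mem_iInter] at h1
      have h2 : i ∈ F (m+1) := by
        rw [hF]
        exact Finset.mem_image.mpr ⟨m, Finset.mem_range.mpr (Nat.lt_succ_self m), hm⟩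
      exact h1 i h2
    intro j k hj hk
    have hh0 : c ≤ h 0 ω := by
      have h0' := hωS 0
      simp only [hCdef, if_pos rfl, Set.mem_Ici] at h0'
      exact h0'
    have hhj : h j ω ≤ c + l * (j:ℝ)^2 := by
      have := hωS j; simpa [hCdef, hj.ne] using this
    have hhk : h k ω ≤ c + l * (k:ℝ)^2 := by
      have := hωS k; simpa [hCdef, hk.ne'] using this
    have hjR : (j:ℝ) < 0 := by exact_mod_cast hj
    have hkR : (0:ℝ) < k := by exact_mod_cast hk
    have hd : (0:ℝ) < (k:ℝ) - j := by linarith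
    have key : (((k:ℝ) - 0) / ((k:ℝ) - j)) * h j ω + (((0:ℝ) - j) / ((k:ℝ) - j)) * h k ω
        ≤ c - l * j * k := by
      rw [div_mul_eq_mul_div, div_mul_eq_mul_div, ← add_div, div_le_iff₀ hd]
      nlinarith [mul_le_mul_of_nonneg_left hhj hkR.le,
        mul_le_mul_of_nonneg_left hhk (by linarith : (0:ℝ) ≤ -(j:ℝ))]
    have hring : l * ((0:ℝ) - j) * ((0:ℝ) - k) = l * j * k := by ring
    linarith
  -- final chain
  have hcgt : 1/2 < c := by
    rw [hc, Real.lt_log_iff_exp_lt (by positivity)]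
    have h1 : Real.exp (1/2 : ℝ) < 3 := by
      calc Real.exp (1/2 : ℝ) ≤ Real.exp 1 := Real.exp_le_exp.mpr (by norm_num)
      _ < 2.7182818286 := Real.exp_one_lt_d9
      _ < 3 := by norm_num
    have h2 : (4:ℝ) < l⁻¹ := by
      rw [lt_inv_comm₀ (by norm_num) hl]; linarith
    linarith
  calc ENNReal.ofReal (K/2 * l / Real.log l⁻¹) < ENNReal.ofReal (l * K) := by
        rw [ENNReal.ofReal_lt_ofReal_iff (by positivity)]
        rw [← hc, div_lt_iff₀ (by linarith : (0:ℝ) < c)]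
        nlinarith [mul_pos (mul_pos hl hK0) (by linarith : (0:ℝ) < c - 1/2)]
  _ ≤ P (⋂ n, G n) := hPG
  _ ≤ _ := measure_mono hsub
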